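/- For every μ > 0, the integral (1/π) ∫_0^∞ (μ/(s² − μ²)) log((1/2) + (1/2)√((1+s²)/(1+μ²))) ds, taken as a principal value, is finite and nonnegative. -/

import Mathlib

open MeasureTheory Real Filter

noncomputable def psAux (μ s : ℝ) : ℝ :=
  (μ / (s ^ 2 - μ ^ 2)) * Real.log (1 / 2 + (1 / 2) * Real.sqrt ((1 + s ^ 2) / (1 + μ ^ 2)))

lemma psAux_nonneg {μ : ℝ} (hμ : 0 < μ) (s : ℝ) : 0 ≤ psAux μ s := by
  have hR0 : (0:ℝ) ≤ (1 + s ^ 2) / (1 + μ ^ 2) := by positivity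
  set R := (1 + s ^ 2) / (1 + μ ^ 2) with hRdef
  have hsq : Real.sqrt R ^ 2 = R := Real.sq_sqrt hR0
  have hsnn : 0 ≤ Real.sqrt R := Real.sqrt_nonneg R
  have hA0 : (0:ℝ) < 1 / 2 + (1 / 2) * Real.sqrt R := by positivity
  rcases lt_trichotomy (s ^ 2) (μ ^ 2) with h | h | h
  · have hR1 : R ≤ 1 := by
      rw [hRdef, div_le_one (by positivity)]; nlinarith
    have ht1 : Real.sqrt R ≤ 1 := Real.sqrt_le_one.2 hR1
    have hlog : Real.log (1 / 2 + (1 / 2) * Real.sqrt R) ≤ 0 :=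
      Real.log_nonpos (by positivity) (by linarith)
    have hdiv : μ / (s ^ 2 - μ ^ 2) ≤ 0 :=
      div_nonpos_of_nonneg_of_nonpos hμ.le (by linarith)
    have := mul_nonneg (neg_nonneg.2 hdiv) (neg_nonneg.2 hlog)
    rw [neg_mul_neg] at this
    exact this
  · unfold psAux
    rw [h, sub_self, div_zero, zero_mul]
  · have hR1 : 1 ≤ R := by
      rw [hRdef, le_div_iff₀ (by positivity)]; nlinarith
    have ht1 : 1 ≤ Real.sqrt R := by nlinarith
    have hlog : 0 ≤ Real.log (1 / 2 + (1 / 2) * Real.sqrt R) :=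
      Real.log_nonneg (by linarith)
    exact mul_nonneg (div_nonneg hμ.le (by linarith)) hlog

lemma psAux_le_bound {μ : ℝ} (hμ : 0 < μ) (s : ℝ) : psAux μ s ≤ μ / (1 + μ ^ 2) := by
  have hR0 : (0:ℝ) ≤ (1 + s ^ 2) / (1 + μ ^ 2) := by positivity
  set R := (1 + s ^ 2) / (1 + μ ^ 2) with hRdef
  have hsq : Real.sqrt R ^ 2 = R := Real.sq_sqrt hR0
  have hsnn : 0 ≤ Real.sqrt R := Real.sqrt_nonneg R
  have hA0 : (0:ℝ) < 1 / 2 + (1 / 2) * Real.sqrt R := by positivity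
  have hden : (0:ℝ) < 1 + μ ^ 2 := by positivity
  have hR1 : R - 1 = (s ^ 2 - μ ^ 2) / (1 + μ ^ 2) := by
    rw [hRdef]; field_simp; ring
  set A := 1 / 2 + (1 / 2) * Real.sqrt R with hAdef
  rcases lt_trichotomy (s ^ 2) (μ ^ 2) with h | h | h
  · -- s² < μ² : use lower bound on log
    have hRle : R ≤ 1 := by
      rw [hRdef, div_le_one (by positivity)]; nlinarith
    have ht1 : Real.sqrt R ≤ 1 := Real.sqrt_le_one.2 hRle
    have hinv : Real.log A⁻¹ ≤ A⁻¹ - 1 := Real.log_le_sub_one_of_pos (by positivity)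
    rw [Real.log_inv] at hinv
    have hAinv : A⁻¹ ≤ 2 - R := by
      rw [inv_eq_one_div, div_le_iff₀ hA0, hAdef]
      have h9 : 1 ≤ (2 - Real.sqrt R ^ 2) * (1 / 2 + 1 / 2 * Real.sqrt R) := by
        nlinarith [mul_nonneg (mul_nonneg hsnn (by linarith : (0:ℝ) ≤ 1 - Real.sqrt R))
          (by linarith : (0:ℝ) ≤ 2 + Real.sqrt R)]
      rw [hsq] at h9
      linarith [h9]
    have hlow : R - 1 ≤ Real.log A := by linarith
    unfold psAux
    rw [div_mul_eq_mul_div, div_le_iff_of_neg (by linarith : s ^ 2 - μ ^ 2 < 0)]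
    have : μ / (1 + μ ^ 2) * (s ^ 2 - μ ^ 2) = μ * (R - 1) := by
      rw [hR1]; ring
    rw [this]
    exact mul_le_mul_of_nonneg_left hlow hμ.le
  · unfold psAux
    rw [h, sub_self, div_zero, zero_mul]; positivity
  · -- μ² < s²
    have hup : Real.log A ≤ (R - 1) / 4 := by
      have h1 := Real.log_le_sub_one_of_pos hA0
      rw [hAdef] at h1
      have h2 : (Real.sqrt R ^ 2 - 1) / 4 ≤ (R - 1) / 4 := by rw [hsq]
      nlinarith [sq_nonneg (Real.sqrt R - 1)]
    have hXnn : (0:ℝ) ≤ (s ^ 2 - μ ^ 2) / (1 + μ ^ 2) := div_nonneg (by linarith) hden.le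
    unfold psAux
    rw [div_mul_eq_mul_div, div_le_iff₀ (by linarith : (0:ℝ) < s ^ 2 - μ ^ 2)]
    calc μ * Real.log A ≤ μ * ((R - 1) / 4) := mul_le_mul_of_nonneg_left hup hμ.le
      _ = μ * ((s ^ 2 - μ ^ 2) / (1 + μ ^ 2) / 4) := by rw [hR1]
      _ ≤ μ * ((s ^ 2 - μ ^ 2) / (1 + μ ^ 2)) :=
          mul_le_mul_of_nonneg_left (by linarith) hμ.le
      _ = μ / (1 + μ ^ 2) * (s ^ 2 - μ ^ 2) := by ring

lemma psAux_le_tail {μ : ℝ} (hμ : 0 < μ) {s : ℝ} (hs : 2 * μ ≤ s) :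
    psAux μ s ≤ 8 * μ / 3 * (Real.sqrt s / s ^ 2) := by
  have hs0 : 0 < s := lt_of_lt_of_le (by positivity) hs
  have hd0 : 0 < s ^ 2 - μ ^ 2 := by nlinarith
  have hd : 3 / 4 * s ^ 2 ≤ s ^ 2 - μ ^ 2 := by nlinarith
  have hR0 : (0:ℝ) ≤ (1 + s ^ 2) / (1 + μ ^ 2) := by positivity
  set R := (1 + s ^ 2) / (1 + μ ^ 2) with hRdef
  have hA0 : (0:ℝ) < 1 / 2 + (1 / 2) * Real.sqrt R := by positivity
  -- A ≤ 1 + s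
  have h1 : Real.sqrt R ≤ Real.sqrt (1 + s ^ 2) :=
    Real.sqrt_le_sqrt (div_le_self (by positivity) (by nlinarith))
  have h2 : Real.sqrt (1 + s ^ 2) ≤ 1 + s := by
    have := Real.sqrt_le_sqrt (show 1 + s ^ 2 ≤ (1 + s) ^ 2 by nlinarith)
    rwa [Real.sqrt_sq (by positivity)] at this
  have hAle : 1 / 2 + (1 / 2) * Real.sqrt R ≤ 1 + s := by nlinarith
  have hlog1 : Real.log (1 / 2 + (1 / 2) * Real.sqrt R) ≤ Real.log (1 + s) :=
    Real.log_le_log hA0 hAle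
  -- log (1+s) ≤ 2 √s
  have hlog2 : Real.log (1 + s) ≤ 2 * Real.sqrt s := by
    have e1 : Real.log (1 + s) = 2 * Real.log (Real.sqrt (1 + s)) := by
      rw [Real.log_sqrt (by positivity)]; ring
    have e2 : Real.log (Real.sqrt (1 + s)) ≤ Real.sqrt (1 + s) - 1 :=
      Real.log_le_sub_one_of_pos (Real.sqrt_pos.2 (by positivity))
    have e3 : Real.sqrt (1 + s) ≤ 1 + Real.sqrt s := by
      have := Real.sqrt_le_sqrt (show 1 + s ≤ (1 + Real.sqrt s) ^ 2 by
        nlinarith [Real.sq_sqrt hs0.le, Real.sqrt_nonneg s])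
      rwa [Real.sqrt_sq (by positivity)] at this
    linarith
  have hnum : μ * Real.log (1 / 2 + (1 / 2) * Real.sqrt R) ≤ μ * (2 * Real.sqrt s) :=
    mul_le_mul_of_nonneg_left (by linarith) hμ.le
  unfold psAux
  rw [div_mul_eq_mul_div]
  calc μ * Real.log (1 / 2 + (1 / 2) * Real.sqrt R) / (s ^ 2 - μ ^ 2)
      ≤ μ * (2 * Real.sqrt s) / (3 / 4 * s ^ 2) :=
        div_le_div₀ (by positivity) hnum (by positivity) hd
    _ = 8 * μ / 3 * (Real.sqrt s / s ^ 2) := by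
        field_simp; ring

lemma psAux_measurable (μ : ℝ) : Measurable (psAux μ) := by
  unfold psAux
  refine Measurable.mul (by fun_prop) (Real.measurable_log.comp ?_)
  fun_prop

lemma psAux_integrable {μ : ℝ} (hμ : 0 < μ) : IntegrableOn (psAux μ) (Set.Ioi 0) := by
  have hmeas := psAux_measurable μ
  have h1 : IntegrableOn (psAux μ) (Set.Ioc 0 (2 * μ)) := by
    have hc : IntegrableOn (fun _ : ℝ => μ / (1 + μ ^ 2)) (Set.Ioc 0 (2 * μ)) :=
      integrableOn_const measure_Ioc_lt_top.ne
    refine hc.mono' hmeas.aestronglyMeasurable.restrict ?_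
    filter_upwards with s
    rw [Real.norm_eq_abs, abs_of_nonneg (psAux_nonneg hμ s)]
    exact psAux_le_bound hμ s
  have h2 : IntegrableOn (psAux μ) (Set.Ioi (2 * μ)) := by
    have hint : IntegrableOn (fun s : ℝ => 8 * μ / 3 * s ^ (-(3 / 2) : ℝ)) (Set.Ioi (2 * μ)) :=
      (integrableOn_Ioi_rpow_of_lt (by norm_num) (by positivity)).const_mul _
    refine hint.mono' hmeas.aestronglyMeasurable.restrict ?_
    filter_upwards [ae_restrict_mem measurableSet_Ioi] with s hs
    have hs2 : 2 * μ ≤ s := le_of_lt hs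
    have hs0 : 0 < s := lt_of_lt_of_le (by positivity) hs2
    rw [Real.norm_eq_abs, abs_of_nonneg (psAux_nonneg hμ s)]
    have heq : Real.sqrt s / s ^ 2 = s ^ (-(3 / 2) : ℝ) := by
      rw [Real.sqrt_eq_rpow, show (s ^ 2 : ℝ) = s ^ (2 : ℝ) by
        rw [← Real.rpow_natCast s 2]; norm_num, ← Real.rpow_sub hs0]
      norm_num
    calc psAux μ s ≤ 8 * μ / 3 * (Real.sqrt s / s ^ 2) := psAux_le_tail hμ hs2
      _ = 8 * μ / 3 * s ^ (-(3 / 2) : ℝ) := by rw [heq]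
  have := h1.union h2
  rwa [Set.Ioc_union_Ioi_eq_Ioi (by positivity : (0:ℝ) ≤ 2 * μ)] at this

/-- For every `μ > 0`, the integral
`(1/π) ∫_0^∞ (μ/(s² − μ²)) log((1/2) + (1/2)√((1+s²)/(1+μ²))) ds`,
taken as a principal value (excising a symmetric interval around the singularity at `s = μ`),
is finite and nonnegative. -/
theorem phase_shift_pv_finite_nonneg (μ : ℝ) (hμ : 0 < μ) :
    ∃ L : ℝ, 0 ≤ L ∧
      Tendsto (fun ε : ℝ =>
          (1 / Real.pi) * ∫ s in Set.Ioi (0 : ℝ) \ Set.Ioo (μ - ε) (μ + ε),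
            (μ / (s ^ 2 - μ ^ 2)) *
              Real.log (1 / 2 + (1 / 2) * Real.sqrt ((1 + s ^ 2) / (1 + μ ^ 2))))
        (nhdsWithin 0 (Set.Ioi 0)) (nhds L) := by
  have hInt := psAux_integrable hμ
  set I : ℝ := ∫ s in Set.Ioi (0:ℝ), psAux μ s with hIdef
  have hInn : 0 ≤ I :=
    setIntegral_nonneg measurableSet_Ioi fun s _ => psAux_nonneg hμ s
  refine ⟨(1 / Real.pi) * I, mul_nonneg (by positivity) hInn, ?_⟩
  show Tendsto (fun ε : ℝ =>
      (1 / Real.pi) * ∫ s in Set.Ioi (0 : ℝ) \ Set.Ioo (μ - ε) (μ + ε), psAux μ s)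
    (nhdsWithin 0 (Set.Ioi 0)) (nhds ((1 / Real.pi) * I))
  have hmemIoo : Set.Ioo (0:ℝ) μ ∈ nhdsWithin (0:ℝ) (Set.Ioi 0) :=
    Ioo_mem_nhdsGT_of_mem ⟨le_refl _, hμ⟩
  have hsub : ∀ ε ∈ Set.Ioo (0:ℝ) μ, Set.Ioo (μ - ε) (μ + ε) ⊆ Set.Ioi (0:ℝ) := by
    intro ε hε x hx
    have := hx.1
    have := hε.2
    simp only [Set.mem_Ioi]
    linarith
  -- the small-interval integral tends to 0
  have key : Tendsto (fun ε : ℝ => ∫ s in Set.Ioo (μ - ε) (μ + ε), psAux μ s)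
      (nhdsWithin 0 (Set.Ioi 0)) (nhds 0) := by
    have hub : Tendsto (fun ε : ℝ => μ / (1 + μ ^ 2) * (2 * ε))
        (nhdsWithin 0 (Set.Ioi 0)) (nhds 0) := by
      have h : Tendsto (fun ε : ℝ => μ / (1 + μ ^ 2) * (2 * ε)) (nhds 0) (nhds 0) := by
        simpa using (show Continuous (fun ε : ℝ => μ / (1 + μ ^ 2) * (2 * ε)) by fun_prop).tendsto (0:ℝ)
      exact h.mono_left nhdsWithin_le_nhds
    refine tendsto_of_tendsto_of_tendsto_of_le_of_le' tendsto_const_nhds hub ?_ ?_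
    · filter_upwards [hmemIoo] with ε hε
      exact setIntegral_nonneg measurableSet_Ioo fun s _ => psAux_nonneg hμ s
    · filter_upwards [hmemIoo] with ε hε
      have hIntOn : IntegrableOn (psAux μ) (Set.Ioo (μ - ε) (μ + ε)) :=
        hInt.mono_set (hsub ε hε)
      have hmono := setIntegral_mono_on hIntOn
        (integrableOn_const measure_Ioo_lt_top.ne) measurableSet_Ioo
        (fun x _ => psAux_le_bound hμ x)
      have hvol : ∫ _ in Set.Ioo (μ - ε) (μ + ε), μ / (1 + μ ^ 2)
          = μ / (1 + μ ^ 2) * (2 * ε) := by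
        rw [setIntegral_const, measureReal_def, Real.volume_Ioo, ENNReal.toReal_ofReal (by linarith [hε.1])]
        have : μ + ε - (μ - ε) = 2 * ε := by ring
        rw [this, smul_eq_mul, mul_comm]
      rw [hvol] at hmono
      exact hmono
  have hfin : Tendsto (fun ε : ℝ =>
      (1 / Real.pi) * (I - ∫ s in Set.Ioo (μ - ε) (μ + ε), psAux μ s))
      (nhdsWithin 0 (Set.Ioi 0)) (nhds ((1 / Real.pi) * I)) := by
    have := (tendsto_const_nhds (x := I)).sub key
    rw [sub_zero] at this
    exact this.const_mul _
  refine hfin.congr' ?_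
  filter_upwards [hmemIoo] with ε hε
  rw [integral_diff measurableSet_Ioo hInt (hsub ε hε)]
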